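/- Let 𝒮 be a metrizable second-countable topological space and (S_n)_{n≥1} a time-homogeneous Markov process on 𝒮 with transition function P and iterated kernels P^k. Then for every Borel set A ⊆ 𝒮, the sequence (inf_{k≥1} P^k_{S_n}((𝒮 \ A)^k))_{n≥1} converges almost surely to the indicator function of the event ⋃_{n≥1} ⋂_{k≥n} {S_{k+1} ∉ A}. -/

import Mathlib

open MeasureTheory ProbabilityTheory Filter Topology
open scoped ENNReal NNReal

noncomputable section

def iterK {S : Type*} [MeasurableSpace S] (κ : Kernel S S) :
    (n : ℕ) → S → Measure (Fin (n + 1) → S)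
  | 0, s => (κ s).map (fun x _ => x)
  | n + 1, s => (iterK κ n s).bind fun p => (κ (p (Fin.last n))).map (Fin.snoc p)

def IsMarkovChain {Ω S : Type*} [MeasurableSpace Ω] [MeasurableSpace S]
    (Pr : Measure Ω) (κ : Kernel S S) (Sp : ℕ → Ω → S) : Prop :=
  (∀ n, Measurable (Sp n)) ∧
  ∀ (n : ℕ) (A : Set S), MeasurableSet A →
    ∀ B : Set Ω,
      MeasurableSet[⨆ i : Fin (n + 1), MeasurableSpace.comap (Sp i) inferInstance] B →
      Pr (B ∩ Sp (n + 1) ⁻¹' A) = ∫⁻ ω in B, κ (Sp n ω) A ∂Pr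

namespace Statement9Aux

variable {S : Type*} [MeasurableSpace S] (κ : Kernel S S) [IsMarkovKernel κ]

lemma measurable_snocfun (k : ℕ) :
    Measurable (fun q : (Fin (k + 1) → S) × S => (Fin.snoc q.1 q.2 : Fin (k + 2) → S)) := by
  apply measurable_pi_lambda
  intro i
  induction i using Fin.lastCases with
  | last => simpa [Fin.snoc_last] using measurable_snd
  | cast j => simp only [Fin.snoc_castSucc]; exact (measurable_pi_apply j).comp measurable_fst

/-- one-step kernel appending a new coordinate. -/
def stepK (k : ℕ) : Kernel (Fin (k + 1) → S) (Fin (k + 2) → S) :=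
  Kernel.map (Kernel.id ×ₖ (κ.comap (fun p => p (Fin.last k)) (measurable_pi_apply _)))
    (fun q => Fin.snoc q.1 q.2)

lemma stepK_apply (k : ℕ) (p : Fin (k + 1) → S) :
    stepK κ k p = (κ (p (Fin.last k))).map (Fin.snoc p) := by
  rw [stepK, Kernel.map_apply _ (measurable_snocfun k), Kernel.prod_apply, Kernel.id_apply,
    Kernel.comap_apply, Measure.dirac_prod, Measure.map_map (measurable_snocfun k)
      (measurable_prodMk_left)]
  rfl

instance (k : ℕ) : IsMarkovKernel (stepK κ k) := by
  rw [stepK]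
  have := Kernel.IsMarkovKernel.map
    (κ := (Kernel.id ×ₖ (κ.comap (fun p : Fin (k+1) → S => p (Fin.last k))
      (measurable_pi_apply _)))) (measurable_snocfun (S := S) k)
  exact this

def iterKer : (k : ℕ) → Kernel S (Fin (k + 1) → S)
  | 0 => Kernel.map κ (fun x _ => x)
  | k + 1 => stepK κ k ∘ₖ iterKer k

instance instIterKerMarkov : ∀ k, IsMarkovKernel (iterKer κ k)
  | 0 => by
    rw [iterKer]
    exact Kernel.IsMarkovKernel.map _ (measurable_pi_lambda _ fun _ => measurable_id)
  | k + 1 => by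
    rw [iterKer]
    haveI := instIterKerMarkov k
    infer_instance

lemma iterK_eq : ∀ (k : ℕ) (s : S), iterK κ k s = iterKer κ k s
  | 0, s => by
    rw [iterK, iterKer]
    exact (Kernel.map_apply _ (measurable_pi_lambda _ fun _ => measurable_id) s).symm
  | k + 1, s => by
    rw [iterK, iterKer, Kernel.comp_apply, iterK_eq k s]
    congr 1
    funext p
    rw [stepK_apply]


/-- The sub-Markov operator `f ↦ s ↦ ∫_{Aᶜ} f dκ_s`. -/
def Uop (A : Set S) (f : S → ℝ≥0∞) : S → ℝ≥0∞ := fun s => ∫⁻ x in Aᶜ, f x ∂κ s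

variable {A : Set S}

lemma measurable_Uop (hA : MeasurableSet A) {f : S → ℝ≥0∞} (hf : Measurable f) :
    Measurable (Uop κ A f) :=
  Measurable.setLIntegral_kernel hf hA.compl

lemma Uop_mono {f g : S → ℝ≥0∞} (h : f ≤ g) : Uop κ A f ≤ Uop κ A g :=
  fun _ => lintegral_mono fun x => h x

lemma Uop_le_one {f : S → ℝ≥0∞} (h : f ≤ fun _ => 1) : Uop κ A f ≤ fun _ => 1 := by
  intro s
  calc ∫⁻ x in Aᶜ, f x ∂κ s ≤ ∫⁻ _ in Aᶜ, 1 ∂κ s := lintegral_mono fun x => h x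
    _ = κ s Aᶜ := setLIntegral_one _
    _ ≤ 1 := prob_le_one

def hfun (A : Set S) (k : ℕ) : S → ℝ≥0∞ := (Uop κ A)^[k + 1] (fun _ => 1)

lemma hfun_le_one : ∀ k, hfun κ A k ≤ fun _ => 1
  | 0 => by
    rw [hfun, Function.iterate_one]
    exact Uop_le_one κ le_rfl
  | k + 1 => by
    rw [hfun, Function.iterate_succ_apply']
    exact Uop_le_one κ (hfun_le_one k)

lemma Uop_iterate_mono {f g : S → ℝ≥0∞} (h : f ≤ g) : ∀ j, (Uop κ A)^[j] f ≤ (Uop κ A)^[j] g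
  | 0 => h
  | j + 1 => by
    rw [Function.iterate_succ_apply, Function.iterate_succ_apply]
    exact Uop_iterate_mono (Uop_mono κ h) j

lemma hfun_succ_le (k : ℕ) : hfun κ A (k + 1) ≤ hfun κ A k := by
  rw [hfun, hfun, Function.iterate_succ_apply]
  exact Uop_iterate_mono κ (Uop_le_one κ le_rfl) (k + 1)

lemma measurable_hfun (hA : MeasurableSet A) : ∀ k, Measurable (hfun κ A k)
  | 0 => by
    rw [hfun, Function.iterate_one]
    exact measurable_Uop κ hA measurable_const
  | k + 1 => by
    rw [hfun, Function.iterate_succ_apply']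
    exact measurable_Uop κ hA (measurable_hfun hA k)

lemma measurableSet_Cset (hA : MeasurableSet A) (k : ℕ) :
    MeasurableSet {p : Fin (k + 1) → S | ∀ i, p i ∉ A} := by
  have : {p : Fin (k + 1) → S | ∀ i, p i ∉ A} = ⋂ i, (fun p => p i) ⁻¹' Aᶜ := by
    ext p; simp [Set.mem_iInter]
  rw [this]
  exact MeasurableSet.iInter fun i => (measurable_pi_apply i) hA.compl

lemma measurable_snoc_fixed {k : ℕ} (q : Fin (k + 1) → S) :
    Measurable (fun x : S => (Fin.snoc q x : Fin (k + 2) → S)) := by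
  exact (measurable_snocfun k).comp measurable_prodMk_left

lemma snoc_mem_Cset {k : ℕ} (q : Fin (k + 1) → S) (x : S) :
    (Fin.snoc q x : Fin (k + 2) → S) ∈ {p : Fin (k + 2) → S | ∀ i, p i ∉ A}
      ↔ (∀ i : Fin (k + 1), q i ∉ A) ∧ x ∉ A := by
  rw [Set.mem_setOf_eq, Fin.forall_fin_succ']
  simp [Fin.snoc_castSucc, Fin.snoc_last]

lemma lintegral_iterKer (hA : MeasurableSet A) :
    ∀ (k : ℕ) (f : S → ℝ≥0∞), Measurable f → ∀ s : S,
      ∫⁻ p in {p : Fin (k + 1) → S | ∀ i, p i ∉ A}, f (p (Fin.last k)) ∂(iterKer κ k s)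
        = (Uop κ A)^[k + 1] f s
  | 0, f, hf, s => by
    rw [Function.iterate_one]
    rw [show iterKer κ 0 = Kernel.map κ (fun x _ => x) from rfl,
      Kernel.map_apply κ (measurable_pi_lambda (fun (x : S) (_ : Fin 1) => x)
        fun _ => measurable_id),
      setLIntegral_map (measurableSet_Cset hA 0)
        (show Measurable fun p : Fin (0 + 1) → S => f (p (Fin.last 0)) from
          hf.comp (measurable_pi_apply _))
        (measurable_pi_lambda (fun (x : S) (_ : Fin 1) => x) fun _ => measurable_id)]
    have hpre : (fun (x : S) (_ : Fin 1) => x) ⁻¹' {p : Fin 1 → S | ∀ i, p i ∉ A} = Aᶜ := by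
      ext x; simp
    rw [hpre]
    rfl
  | k + 1, f, hf, s => by
    have hCmeas := measurableSet_Cset (S := S) hA (k + 1)
    have hg : Measurable fun p : Fin (k + 2) → S =>
        Set.indicator {p : Fin (k + 2) → S | ∀ i, p i ∉ A} (fun p => f (p (Fin.last (k + 1)))) p :=
      (hf.comp (measurable_pi_apply _)).indicator hCmeas
    rw [show iterKer κ (k+1) = stepK κ k ∘ₖ iterKer κ k from rfl]
    rw [← lintegral_indicator hCmeas, Kernel.lintegral_comp _ _ _ hg]
    have hinner : ∀ q : Fin (k + 1) → S,
        (∫⁻ p, Set.indicator {p : Fin (k + 2) → S | ∀ i, p i ∉ A}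
          (fun p => f (p (Fin.last (k + 1)))) p ∂(stepK κ k q))
        = Set.indicator {p : Fin (k + 1) → S | ∀ i, p i ∉ A}
            (fun q => Uop κ A f (q (Fin.last k))) q := by
      intro q
      rw [stepK_apply, lintegral_map hg (measurable_snoc_fixed q)]
      have hpt : ∀ x : S, Set.indicator {p : Fin (k + 2) → S | ∀ i, p i ∉ A}
            (fun p => f (p (Fin.last (k + 1)))) (Fin.snoc q x)
          = Set.indicator {p : Fin (k + 1) → S | ∀ i, p i ∉ A}
              (fun _ => Set.indicator Aᶜ f x) q := by
        intro x
        have hiff : (∀ i : Fin (k + 2), (Fin.snoc q x : Fin (k + 2) → S) i ∉ A)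
            ↔ ((∀ i : Fin (k + 1), q i ∉ A) ∧ x ∉ A) := snoc_mem_Cset q x
        by_cases hq : ∀ i : Fin (k + 1), q i ∉ A <;> by_cases hx : x ∈ A <;>
          simp [Set.indicator_apply, hiff, hq, hx, Fin.snoc_last]
      simp_rw [hpt]
      by_cases hq : q ∈ {p : Fin (k + 1) → S | ∀ i, p i ∉ A}
      · simp only [Set.indicator_of_mem hq]
        rw [lintegral_indicator hA.compl]
        rfl
      · simp only [Set.indicator_of_notMem hq]
        simp
    simp_rw [hinner]
    rw [lintegral_indicator (measurableSet_Cset hA k),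
      lintegral_iterKer hA k (Uop κ A f) (measurable_Uop κ hA hf) s]
    exact congrFun (Function.iterate_succ_apply (Uop κ A) (k + 1) f).symm s

lemma iterK_Cset_eq (hA : MeasurableSet A) (k : ℕ) (s : S) :
    iterK κ k s {p : Fin (k + 1) → S | ∀ i, p i ∉ A} = hfun κ A k s := by
  rw [iterK_eq, hfun, ← lintegral_iterKer κ hA k (fun _ => 1) measurable_const s]
  simp [setLIntegral_one]

section MarkovChain

variable {Ω : Type*} [MeasurableSpace Ω] (Pr : Measure Ω) [IsProbabilityMeasure Pr]
variable (Sp : ℕ → Ω → S)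

/-- the natural filtration (as a plain function). -/
abbrev ffil (n : ℕ) : MeasurableSpace Ω :=
  ⨆ i : Fin (n + 1), MeasurableSpace.comap (Sp i) inferInstance

lemma comap_le_ffil {j n : ℕ} (h : j ≤ n) :
    MeasurableSpace.comap (Sp j) inferInstance ≤ ffil Sp n :=
  le_iSup_of_le (⟨j, by omega⟩ : Fin (n + 1)) le_rfl

lemma ffil_mono {a b : ℕ} (h : a ≤ b) : ffil Sp a ≤ ffil Sp b :=
  iSup_le fun i => comap_le_ffil Sp (by omega : (i : ℕ) ≤ b)

lemma ffil_le (hSp : ∀ n, Measurable (Sp n)) (n : ℕ) : ffil Sp n ≤ ‹MeasurableSpace Ω› :=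
  iSup_le fun i => (hSp i).comap_le

lemma meas_preimage_ffil {j n : ℕ} (h : j ≤ n) {t : Set S} (ht : MeasurableSet t) :
    MeasurableSet[ffil Sp n] (Sp j ⁻¹' t) :=
  comap_le_ffil Sp h _ ⟨t, ht, rfl⟩

variable {Pr Sp}
variable (hM : _root_.IsMarkovChain Pr κ Sp)
include hM

lemma onestep (n : ℕ) {B : Set Ω} (hB : MeasurableSet[ffil Sp n] B)
    {g : S → ℝ≥0∞} (hg : Measurable g) :
    ∫⁻ ω in B, g (Sp (n + 1) ω) ∂Pr = ∫⁻ ω in B, ∫⁻ x, g x ∂(κ (Sp n ω)) ∂Pr := by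
  refine Measurable.ennreal_induction
    (motive := fun g => ∫⁻ ω in B, g (Sp (n + 1) ω) ∂Pr
      = ∫⁻ ω in B, ∫⁻ x, g x ∂(κ (Sp n ω)) ∂Pr) ?_ ?_ ?_ hg
  · intro c t ht
    calc ∫⁻ ω in B, t.indicator (fun _ => c) (Sp (n + 1) ω) ∂Pr
        = ∫⁻ ω in B, (Sp (n + 1) ⁻¹' t).indicator (fun _ => c) ω ∂Pr := by
          apply lintegral_congr; intro ω
          by_cases h : Sp (n + 1) ω ∈ t <;> simp [Set.indicator_apply, h]
      _ = c * Pr.restrict B (Sp (n + 1) ⁻¹' t) := lintegral_indicator_const ((hM.1 (n + 1)) ht) c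
      _ = c * Pr (B ∩ Sp (n + 1) ⁻¹' t) := by
          rw [Measure.restrict_apply ((hM.1 (n + 1)) ht), Set.inter_comm]
      _ = c * ∫⁻ ω in B, κ (Sp n ω) t ∂Pr := by rw [hM.2 n t ht B hB]
      _ = ∫⁻ ω in B, c * κ (Sp n ω) t ∂Pr :=
          (lintegral_const_mul c ((Kernel.measurable_coe κ ht).comp (hM.1 n))).symm
      _ = ∫⁻ ω in B, ∫⁻ x, t.indicator (fun _ => c) x ∂(κ (Sp n ω)) ∂Pr := by
          apply lintegral_congr; intro ω
          rw [lintegral_indicator_const ht c]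
  · intro f g _ hf hg hPf hPg
    have hmf : Measurable fun ω => f (Sp (n + 1) ω) := hf.comp (hM.1 (n + 1))
    have hmF : Measurable fun ω => ∫⁻ x, f x ∂(κ (Sp n ω)) :=
      (Measurable.lintegral_kernel hf).comp (hM.1 n)
    calc ∫⁻ ω in B, (f + g) (Sp (n + 1) ω) ∂Pr
        = (∫⁻ ω in B, f (Sp (n + 1) ω) ∂Pr) + ∫⁻ ω in B, g (Sp (n + 1) ω) ∂Pr := by
          simp only [Pi.add_apply]
          exact lintegral_add_left hmf _
      _ = (∫⁻ ω in B, ∫⁻ x, f x ∂(κ (Sp n ω)) ∂Pr) + ∫⁻ ω in B, ∫⁻ x, g x ∂(κ (Sp n ω)) ∂Pr := by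
          rw [hPf, hPg]
      _ = ∫⁻ ω in B, ∫⁻ x, (f + g) x ∂(κ (Sp n ω)) ∂Pr := by
          rw [← lintegral_add_left hmF]
          apply lintegral_congr; intro ω
          rw [← lintegral_add_left hf]
          rfl
  · intro f hf hmono hP
    calc ∫⁻ ω in B, (fun x => ⨆ j, f j x) (Sp (n + 1) ω) ∂Pr
        = ⨆ j, ∫⁻ ω in B, f j (Sp (n + 1) ω) ∂Pr := by
          simp only []
          exact lintegral_iSup (fun j => (hf j).comp (hM.1 (n + 1)))
            (fun a b hab ω => hmono hab _)
      _ = ⨆ j, ∫⁻ ω in B, ∫⁻ x, f j x ∂(κ (Sp n ω)) ∂Pr := by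
          exact iSup_congr fun j => hP j
      _ = ∫⁻ ω in B, ⨆ j, ∫⁻ x, f j x ∂(κ (Sp n ω)) ∂Pr := by
          refine (lintegral_iSup (f := fun j ω => ∫⁻ x, f j x ∂(κ (Sp n ω))) (fun j => ?_)
            (fun a b hab ω => lintegral_mono fun x => hmono hab x)).symm
          exact (Measurable.lintegral_kernel (hf j)).comp (hM.1 n)
      _ = ∫⁻ ω in B, ∫⁻ x, (fun x => ⨆ j, f j x) x ∂(κ (Sp n ω)) ∂Pr := by
          apply lintegral_congr; intro ω
          exact (lintegral_iSup hf hmono).symm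

lemma Mzero (n : ℕ) {B : Set Ω} (hB : MeasurableSet[ffil Sp n] B) (hA : MeasurableSet A)
    {f : S → ℝ≥0∞} (hf : Measurable f) :
    ∫⁻ ω in B ∩ Sp (n + 1) ⁻¹' Aᶜ, f (Sp (n + 1) ω) ∂Pr
      = ∫⁻ ω in B, Uop κ A f (Sp n ω) ∂Pr := by
  have hBm : MeasurableSet B := ffil_le Sp hM.1 n _ hB
  have hpre : MeasurableSet (Sp (n + 1) ⁻¹' Aᶜ) := (hM.1 (n + 1)) hA.compl
  have h1 : ∫⁻ ω in B ∩ Sp (n + 1) ⁻¹' Aᶜ, f (Sp (n + 1) ω) ∂Pr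
      = ∫⁻ ω in B, (Aᶜ.indicator f) (Sp (n + 1) ω) ∂Pr := by
    rw [show (∫⁻ ω in B, (Aᶜ.indicator f) (Sp (n + 1) ω) ∂Pr)
        = ∫⁻ ω in B, (Sp (n + 1) ⁻¹' Aᶜ).indicator (fun ω => f (Sp (n + 1) ω)) ω ∂Pr from
      lintegral_congr fun ω => by
        by_cases h : Sp (n + 1) ω ∈ A <;> simp [Set.indicator_apply, h]]
    rw [lintegral_indicator hpre, Measure.restrict_restrict hpre, Set.inter_comm]
  rw [h1, onestep κ hM n hB (hf.indicator hA.compl)]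
  apply lintegral_congr; intro ω
  rw [lintegral_indicator hA.compl]
  rfl

lemma Mprime (hA : MeasurableSet A) :
    ∀ (k n : ℕ) (f : S → ℝ≥0∞), Measurable f → ∀ B : Set Ω, MeasurableSet[ffil Sp n] B →
      ∫⁻ ω in B ∩ ⋂ i : Fin (k + 1), Sp (n + 1 + i) ⁻¹' Aᶜ, f (Sp (n + 1 + k) ω) ∂Pr
        = ∫⁻ ω in B, (Uop κ A)^[k + 1] f (Sp n ω) ∂Pr
  | 0, n, f, hf, B, hB => by
    have hD : (⋂ i : Fin 1, Sp (n + 1 + (i : ℕ)) ⁻¹' Aᶜ) = Sp (n + 1) ⁻¹' Aᶜ := by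
      ext ω
      simp only [Set.mem_iInter]
      constructor
      · intro h; simpa using h 0
      · intro h i
        have : (i : ℕ) = 0 := by omega
        simpa [this] using h
    rw [hD, Function.iterate_one]
    simpa using Mzero κ hM n hB hA hf
  | k + 1, n, f, hf, B, hB => by
    have hsplit : (⋂ i : Fin (k + 2), Sp (n + 1 + (i : ℕ)) ⁻¹' Aᶜ)
        = (⋂ i : Fin (k + 1), Sp (n + 1 + (i : ℕ)) ⁻¹' Aᶜ) ∩ Sp (n + k + 1 + 1) ⁻¹' Aᶜ := by
      ext ω
      simp only [Set.mem_iInter, Set.mem_inter_iff]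
      rw [Fin.forall_fin_succ']
      constructor
      · rintro ⟨h1, h2⟩
        refine ⟨fun i => by simpa using h1 i, ?_⟩
        have : n + 1 + ((Fin.last (k + 1) : Fin (k + 2)) : ℕ) = n + k + 1 + 1 := by
          simp [Fin.val_last]; omega
        rwa [this] at h2
      · rintro ⟨h1, h2⟩
        refine ⟨fun i => by simpa using h1 i, ?_⟩
        have : n + 1 + ((Fin.last (k + 1) : Fin (k + 2)) : ℕ) = n + k + 1 + 1 := by
          simp [Fin.val_last]; omega
        rwa [this]
    have hBD : MeasurableSet[ffil Sp (n + k + 1)]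
        (B ∩ ⋂ i : Fin (k + 1), Sp (n + 1 + (i : ℕ)) ⁻¹' Aᶜ) := by
      refine MeasurableSet.inter (ffil_mono Sp (by omega) _ hB) ?_
      exact MeasurableSet.iInter fun i =>
        meas_preimage_ffil Sp (by omega : n + 1 + (i : ℕ) ≤ n + k + 1) hA.compl
    have hstep := Mzero κ hM (n + k + 1) hBD hA hf
    have harr : n + 1 + (k + 1) = n + k + 1 + 1 := by omega
    rw [hsplit, ← Set.inter_assoc, harr, hstep]
    have hrec := Mprime hA k n (Uop κ A f) (measurable_Uop κ hA hf) B hB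
    have harr2 : n + k + 1 = n + 1 + k := by omega
    rw [harr2, hrec]
    apply lintegral_congr; intro ω
    exact congrFun (Function.iterate_succ_apply (Uop κ A) (k + 1) f).symm (Sp n ω)

lemma keyM (hA : MeasurableSet A) (n k : ℕ) {B : Set Ω} (hB : MeasurableSet[ffil Sp n] B) :
    Pr (B ∩ ⋂ i : Fin (k + 1), Sp (n + 1 + (i : ℕ)) ⁻¹' Aᶜ)
      = ∫⁻ ω in B, hfun κ A k (Sp n ω) ∂Pr := by
  have := Mprime κ hM hA k n (fun _ => 1) measurable_const B hB
  rw [hfun, ← this]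
  simp [setLIntegral_one]

variable (Sp) in
/-- the event "never hits `A` after time `n`". -/
def Einf (A : Set S) (n : ℕ) : Set Ω := ⋂ k, ⋂ (_ : n ≤ k), {ω | Sp (k + 1) ω ∉ A}

omit hM in
lemma iInter_Dset (n : ℕ) :
    (⋂ k, ⋂ i : Fin (k + 1), Sp (n + 1 + (i : ℕ)) ⁻¹' Aᶜ) = Einf Sp A n := by
  ext ω
  simp only [Einf, Set.mem_iInter, Set.mem_preimage, Set.mem_compl_iff, Set.mem_setOf_eq]
  constructor
  · intro h k hk
    have := h k ⟨k - n, by omega⟩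
    rwa [show n + 1 + ((⟨k - n, by omega⟩ : Fin (k + 1)) : ℕ) = k + 1 from by
      simp; omega] at this
  · intro h k i
    have := h (n + (i : ℕ)) (by omega)
    rwa [show n + (i : ℕ) + 1 = n + 1 + (i : ℕ) from by omega] at this

omit hM in
lemma measurableSet_Einf_ffil (hA : MeasurableSet A) (n : ℕ) {m : MeasurableSpace Ω}
    (hle : ∀ j, MeasurableSpace.comap (Sp j) inferInstance ≤ m) :
    MeasurableSet[m] (Einf Sp A n) := by
  refine MeasurableSet.iInter fun k => MeasurableSet.iInter fun _ => ?_
  exact hle (k + 1) _ ⟨Aᶜ, hA.compl, rfl⟩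

lemma condprop (hA : MeasurableSet A) (n : ℕ) {B : Set Ω} (hB : MeasurableSet[ffil Sp n] B) :
    ∫⁻ ω in B, (⨅ k, hfun κ A k (Sp n ω)) ∂Pr = Pr (B ∩ Einf Sp A n) := by
  have hmeas : ∀ k, Measurable fun ω => hfun κ A k (Sp n ω) := fun k =>
    (measurable_hfun κ hA k).comp (hM.1 n)
  have hanti : Antitone fun k (ω : Ω) => hfun κ A k (Sp n ω) :=
    antitone_nat_of_succ_le fun k ω => hfun_succ_le κ k (Sp n ω)
  have hBm : MeasurableSet B := ffil_le Sp hM.1 n _ hB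
  have hfin : ∫⁻ ω in B, hfun κ A 0 (Sp n ω) ∂Pr ≠ ⊤ := by
    refine ne_top_of_le_ne_top (measure_ne_top Pr B) ?_
    calc ∫⁻ ω in B, hfun κ A 0 (Sp n ω) ∂Pr
        ≤ ∫⁻ _ in B, 1 ∂Pr := lintegral_mono fun ω => hfun_le_one κ 0 _
      _ = Pr B := setLIntegral_one B
  rw [lintegral_iInf hmeas hanti hfin]
  have hkey : ∀ k, ∫⁻ ω in B, hfun κ A k (Sp n ω) ∂Pr
      = Pr (B ∩ ⋂ i : Fin (k + 1), Sp (n + 1 + (i : ℕ)) ⁻¹' Aᶜ) := fun k =>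
    (keyM κ hM hA n k hB).symm
  rw [iInf_congr hkey]
  have hset : (⋂ k, B ∩ ⋂ i : Fin (k + 1), Sp (n + 1 + (i : ℕ)) ⁻¹' Aᶜ) = B ∩ Einf Sp A n := by
    rw [← iInter_Dset (Sp := Sp) (A := A) n, Set.inter_iInter]
  rw [← hset]
  have hDanti : Antitone fun k => ⋂ i : Fin (k + 1), Sp (n + 1 + (i : ℕ)) ⁻¹' Aᶜ := by
    refine antitone_nat_of_succ_le fun k => ?_
    intro ω hω
    simp only [Set.mem_iInter] at hω ⊢
    intro i
    have := hω i.castSucc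
    rwa [show n + 1 + ((i.castSucc : Fin (k + 2)) : ℕ) = n + 1 + (i : ℕ) from by
      simp [Fin.coe_castSucc]] at this
  refine (Directed.measure_iInter (fun k => ?_) ?_ ⟨0, measure_ne_top Pr _⟩).symm
  · refine (hBm.inter (MeasurableSet.iInter fun i => ?_)).nullMeasurableSet
    exact (hM.1 _) hA.compl
  · exact (Antitone.directed_ge fun a b hab =>
      Set.inter_subset_inter_right B (hDanti hab))

lemma hYZ (hA : MeasurableSet A) (n : ℕ) :
    (fun ω => ⨅ k, hfun κ A k (Sp n ω)) =ᵐ[Pr]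
      fun ω => ENNReal.ofReal
        ((Pr[(Einf Sp A n).indicator (fun _ => (1 : ℝ)) | ffil Sp n]) ω) := by
  have hm : ffil Sp n ≤ ‹MeasurableSpace Ω› := ffil_le Sp hM.1 n
  haveI : IsFiniteMeasure (Pr.trim hm) := isFiniteMeasure_trim hm
  haveI : SigmaFinite (Pr.trim hm) := inferInstance
  have hEmeas : MeasurableSet (Einf Sp A n) :=
    measurableSet_Einf_ffil hA n fun j => (hM.1 j).comap_le
  have hint : Integrable ((Einf Sp A n).indicator fun _ => (1 : ℝ)) Pr :=
    (integrable_const 1).indicator hEmeas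
  have hSpm : Measurable[ffil Sp n] (Sp n) :=
    measurable_iff_comap_le.mpr (comap_le_ffil Sp le_rfl)
  have hfm : Measurable[ffil Sp n] fun ω => ⨅ k, hfun κ A k (Sp n ω) := by
    exact (Measurable.iInf fun k => measurable_hfun κ hA k).comp hSpm
  have hgm : Measurable[ffil Sp n] fun ω => ENNReal.ofReal
      ((Pr[(Einf Sp A n).indicator (fun _ => (1 : ℝ)) | ffil Sp n]) ω) :=
    stronglyMeasurable_condExp.measurable.ennreal_ofReal
  refine ae_eq_of_ae_eq_trim (hm := hm)
    (ae_eq_of_forall_setLIntegral_eq_of_sigmaFinite hfm hgm ?_)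
  intro s hs _
  have hsΩ : MeasurableSet s := hm _ hs
  rw [restrict_trim hm Pr hs, lintegral_trim hm hfm, lintegral_trim hm hgm]
  rw [condprop κ hM hA n hs]
  refine Eq.symm ?_
  have hnn : 0 ≤ᵐ[Pr.restrict s] Pr[(Einf Sp A n).indicator (fun _ => (1 : ℝ)) | ffil Sp n] :=
    ae_restrict_of_ae (condExp_nonneg (Eventually.of_forall fun ω =>
      Set.indicator_nonneg (fun _ _ => zero_le_one) ω))
  calc ∫⁻ ω in s, ENNReal.ofReal
        ((Pr[(Einf Sp A n).indicator (fun _ => (1 : ℝ)) | ffil Sp n]) ω) ∂Pr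
      = ENNReal.ofReal (∫ ω in s,
          (Pr[(Einf Sp A n).indicator (fun _ => (1 : ℝ)) | ffil Sp n]) ω ∂Pr) :=
        (ofReal_integral_eq_lintegral_ofReal integrable_condExp.restrict hnn).symm
    _ = ENNReal.ofReal (∫ ω in s, (Einf Sp A n).indicator (fun _ => (1 : ℝ)) ω ∂Pr) := by
        rw [setIntegral_condExp hm hint hs]
    _ = ENNReal.ofReal ((Pr (s ∩ Einf Sp A n)).toReal) := by
        rw [setIntegral_indicator hEmeas]
        simp [setIntegral_const]
    _ = Pr (s ∩ Einf Sp A n) := ENNReal.ofReal_toReal (measure_ne_top _ _)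

variable (Sp) in
def natFil (hSp : ∀ n, Measurable (Sp n)) : Filtration ℕ ‹MeasurableSpace Ω› where
  seq := fun n => ffil Sp n
  mono' := fun _ _ h => ffil_mono Sp h
  le' := fun n => ffil_le Sp hSp n

end MarkovChain

end Statement9Aux

open Statement9Aux in
theorem statement9 {S : Type*} [TopologicalSpace S] [TopologicalSpace.MetrizableSpace S]
    [SecondCountableTopology S] [MeasurableSpace S] [BorelSpace S]
    {Ω : Type*} [MeasurableSpace Ω] (Pr : Measure Ω) [IsProbabilityMeasure Pr]
    (κ : Kernel S S) [IsMarkovKernel κ]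
    (Sp : ℕ → Ω → S) (hMarkov : IsMarkovChain Pr κ Sp)
    (A : Set S) (hA : MeasurableSet A) :
    ∀ᵐ ω ∂Pr, Tendsto
      (fun n => ⨅ k : ℕ, iterK κ k (Sp n ω) {p : Fin (k + 1) → S | ∀ i, p i ∉ A})
      atTop
      (nhds (Set.indicator (⋃ m : ℕ, ⋂ k : ℕ, ⋂ _ : m ≤ k, {ω' : Ω | Sp (k + 1) ω' ∉ A})
        (fun _ => (1 : ENNReal)) ω)) := by
  have hSp : ∀ n, Measurable (Sp n) := hMarkov.1
  set ℱ : Filtration ℕ ‹MeasurableSpace Ω› := natFil Sp hSp with hFdef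
  have hFn : ∀ n, (ℱ n : MeasurableSpace Ω) = ffil Sp n := fun n => rfl
  set E : Set Ω := ⋃ m, Einf Sp A m with hEdef
  have hEshape : (⋃ m : ℕ, ⋂ k : ℕ, ⋂ _ : m ≤ k, {ω' : Ω | Sp (k + 1) ω' ∉ A}) = E := rfl
  rw [hEshape]
  have hEinfmeas : ∀ n, MeasurableSet (Einf Sp A n) := fun n =>
    measurableSet_Einf_ffil hA n fun j => (hSp j).comap_le
  have hEmeas : MeasurableSet E := MeasurableSet.iUnion hEinfmeas
  have hEinfsup : ∀ n, MeasurableSet[⨆ n, (ℱ n : MeasurableSpace Ω)] (Einf Sp A n) := fun n =>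
    measurableSet_Einf_ffil hA n fun j =>
      le_trans (comap_le_ffil Sp le_rfl) (le_iSup (fun i => (ℱ i : MeasurableSpace Ω)) j)
  have hEsup : MeasurableSet[⨆ n, (ℱ n : MeasurableSpace Ω)] E := MeasurableSet.iUnion hEinfsup
  have hint : ∀ t : Set Ω, MeasurableSet t → Integrable (t.indicator fun _ => (1 : ℝ)) Pr :=
    fun t ht => (integrable_const 1).indicator ht
  have hlevy : ∀ t : Set Ω, MeasurableSet t → MeasurableSet[⨆ n, (ℱ n : MeasurableSpace Ω)] t →
      ∀ᵐ ω ∂Pr, Tendsto (fun n => (Pr[t.indicator (fun _ => (1 : ℝ))|ℱ n]) ω) atTop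
        (𝓝 (t.indicator (fun _ => (1 : ℝ)) ω)) := fun t ht htsup =>
    Integrable.tendsto_ae_condExp (hint t ht) (stronglyMeasurable_const.indicator htsup)
  have hEsub : ∀ m n : ℕ, m ≤ n → Einf Sp A m ⊆ Einf Sp A n := by
    intro m n hmn ω hω
    simp only [Einf, Set.mem_iInter, Set.mem_setOf_eq] at hω ⊢
    exact fun k hk => hω k (le_trans hmn hk)
  have hindmono : ∀ s t : Set Ω, s ⊆ t →
      (s.indicator fun _ => (1 : ℝ)) ≤ t.indicator fun _ => (1 : ℝ) := fun s t hst =>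
    Set.indicator_le_indicator_of_subset hst (fun _ => zero_le_one)
  have h1 : ∀ᵐ ω ∂Pr, ∀ m, Tendsto (fun n => (Pr[(Einf Sp A m).indicator (fun _ => (1 : ℝ))|ℱ n]) ω)
      atTop (𝓝 ((Einf Sp A m).indicator (fun _ => (1 : ℝ)) ω)) :=
    ae_all_iff.2 fun m => hlevy _ (hEinfmeas m) (hEinfsup m)
  have h2 : ∀ᵐ ω ∂Pr, Tendsto (fun n => (Pr[E.indicator (fun _ => (1 : ℝ))|ℱ n]) ω)
      atTop (𝓝 (E.indicator (fun _ => (1 : ℝ)) ω)) := hlevy _ hEmeas hEsup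
  have h3 : ∀ᵐ ω ∂Pr, ∀ n, (⨅ k, hfun κ A k (Sp n ω))
      = ENNReal.ofReal ((Pr[(Einf Sp A n).indicator (fun _ => (1 : ℝ))|ℱ n]) ω) :=
    ae_all_iff.2 fun n => hYZ κ hMarkov hA n
  have h4 : ∀ᵐ ω ∂Pr, ∀ m n : ℕ, m ≤ n →
      (Pr[(Einf Sp A m).indicator (fun _ => (1 : ℝ))|ℱ n]) ω
        ≤ (Pr[(Einf Sp A n).indicator (fun _ => (1 : ℝ))|ℱ n]) ω := by
    refine ae_all_iff.2 fun m => ae_all_iff.2 fun n => ?_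
    by_cases hmn : m ≤ n
    · exact (condExp_mono (hint _ (hEinfmeas m)) (hint _ (hEinfmeas n))
        (Eventually.of_forall fun ω => hindmono _ _ (hEsub m n hmn) ω)).mono
        fun ω h _ => h
    · exact Eventually.of_forall fun ω h => absurd h hmn
  have h5 : ∀ᵐ ω ∂Pr, ∀ n : ℕ,
      (Pr[(Einf Sp A n).indicator (fun _ => (1 : ℝ))|ℱ n]) ω
        ≤ (Pr[E.indicator (fun _ => (1 : ℝ))|ℱ n]) ω :=
    ae_all_iff.2 fun n => condExp_mono (hint _ (hEinfmeas n)) (hint _ hEmeas)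
      (Eventually.of_forall fun ω => hindmono _ _ (Set.subset_iUnion (Einf Sp A) n) ω)
  filter_upwards [h1, h2, h3, h4, h5] with ω H1 H2 H3 H4 H5
  have hfneq : (fun n => ⨅ k : ℕ, iterK κ k (Sp n ω) {p : Fin (k + 1) → S | ∀ i, p i ∉ A})
      = fun n => ENNReal.ofReal ((Pr[(Einf Sp A n).indicator (fun _ => (1 : ℝ))|ℱ n]) ω) := by
    funext n
    rw [iInf_congr fun k => iterK_Cset_eq κ hA k (Sp n ω)]
    exact H3 n
  rw [hfneq]
  by_cases hω : ω ∈ E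
  · rw [Set.indicator_of_mem hω]
    obtain ⟨m, hm⟩ : ∃ m, ω ∈ Einf Sp A m := Set.mem_iUnion.mp hω
    refine tendsto_of_tendsto_of_tendsto_of_le_of_le'
      (g := fun n => ENNReal.ofReal ((Pr[(Einf Sp A m).indicator (fun _ => (1 : ℝ))|ℱ n]) ω))
      (h := fun _ => (1 : ℝ≥0∞)) ?_ tendsto_const_nhds ?_ ?_
    · have := (ENNReal.continuous_ofReal.tendsto _).comp (H1 m)
      rwa [Function.comp_def, Set.indicator_of_mem hm, ENNReal.ofReal_one] at this
    · filter_upwards [eventually_ge_atTop m] with n hn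
      exact ENNReal.ofReal_le_ofReal (H4 m n hn)
    · refine Eventually.of_forall fun n => ?_
      calc ENNReal.ofReal ((Pr[(Einf Sp A n).indicator (fun _ => (1 : ℝ))|ℱ n]) ω)
          = ⨅ k, hfun κ A k (Sp n ω) := (H3 n).symm
        _ ≤ hfun κ A 0 (Sp n ω) := iInf_le _ 0
        _ ≤ 1 := hfun_le_one κ 0 _
  · rw [Set.indicator_of_notMem hω]
    refine tendsto_of_tendsto_of_tendsto_of_le_of_le
      (g := fun _ => (0 : ℝ≥0∞))
      (h := fun n => ENNReal.ofReal ((Pr[E.indicator (fun _ => (1 : ℝ))|ℱ n]) ω))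
      tendsto_const_nhds ?_ (fun n => zero_le)
      (fun n => ENNReal.ofReal_le_ofReal (H5 n))
    have := (ENNReal.continuous_ofReal.tendsto _).comp H2
    rwa [Function.comp_def, Set.indicator_of_notMem hω, ENNReal.ofReal_zero] at this
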